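/- Let N be an n-bit binary counter, let R be a valid configuration of N, and let u be a word over the instruction set I of N such that |R·u| = |R|. Then R·u is a valid configuration of N. -/

import Mathlib

/-- Partial transformations on `Q` (partial functions `Q → Q`), with
left-to-right composition: `q·(fg) = (q·f)·g`. -/
def PTrans (Q : Type*) : Type _ := Q → Option Q

/-- The image `R·f` of a configuration `R` under a partial transformation `f`. -/
def pApply {Q : Type*} (R : Set Q) (f : PTrans Q) : Set Q :=
  {q' | ∃ q ∈ R, f q = some q'}

/-- The image `R·u` of a configuration under a word of partial transformations. -/
def wordApply {Q : Type*} (R : Set Q) (u : List (PTrans Q)) : Set Q :=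
  u.foldl pApply R

/-! ### The `n`-bit binary counter
Cells: `(0, i) = dᵢ` (tape `S`), `(1, i) = cᵢ` (tape `T`), `(2, i) = c̄ᵢ`
(tape `T̄`). -/

variable (n : ℕ) [NeZero n]

/-- The cell `dᵢ` of the tape `S`. -/
def dCell (i : Fin n) : Fin 3 × Fin n := (0, i)

/-- The cell `cᵢ` of the tape `T`. -/
def cCell (i : Fin n) : Fin 3 × Fin n := (1, i)

/-- The cell `c̄ᵢ` of the tape `T̄`. -/
def cbarCell (i : Fin n) : Fin 3 × Fin n := (2, i)

/-- `ι_rotl` : cyclic left rotation on all three tapes. -/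
def rotl : PTrans (Fin 3 × Fin n) := fun x => some (x.1, x.2 + 1)

/-- `ι_rotr` : cyclic right rotation on all three tapes. -/
def rotr : PTrans (Fin 3 × Fin n) := fun x => some (x.1, x.2 - 1)

/-- `ι_{=0}` : undefined on `c₀`, identity on all other cells. -/
def eqz : PTrans (Fin 3 × Fin n) := fun x => if x = cCell n 0 then none else some x

/-- `ι_{=1}` : undefined on `c̄₀`, identity on all other cells. -/
def eqo : PTrans (Fin 3 × Fin n) := fun x => if x = cbarCell n 0 then none else some x

/-- `ι_sync` : undefined on `d₁, …, d_{n-1}`, identity on all other cells. -/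
def syncI : PTrans (Fin 3 × Fin n) :=
  fun x => if x.1 = 0 ∧ x.2 ≠ 0 then none else some x

/-- `ι_off` : undefined on `d₀`, identity on all other cells. -/
def offI : PTrans (Fin 3 × Fin n) := fun x => if x = dCell n 0 then none else some x

/-- `ι_inc` : maps `c̄₀` to `c₀`, undefined on `c₀`, identity elsewhere. -/
def incI : PTrans (Fin 3 × Fin n) :=
  fun x => if x = cbarCell n 0 then some (cCell n 0)
    else if x = cCell n 0 then none else some x

/-- `ι_dec` : maps `c₀` to `c̄₀`, undefined on `c̄₀`, identity elsewhere. -/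
def decI : PTrans (Fin 3 × Fin n) :=
  fun x => if x = cCell n 0 then some (cbarCell n 0)
    else if x = cbarCell n 0 then none else some x

/-- The instruction set of the `n`-bit binary counter. -/
def counterI : Set (PTrans (Fin 3 × Fin n)) :=
  {rotl n, rotr n, eqz n, eqo n, syncI n, offI n, incI n, decI n}

/-- A configuration is valid if it contains exactly one cell of the tape `S` and,
for each `i`, exactly one of `cᵢ`, `c̄ᵢ`. -/
def ValidConf (R : Set (Fin 3 × Fin n)) : Prop :=
  (∃! i : Fin n, dCell n i ∈ R) ∧ ∀ i : Fin n, (cCell n i ∈ R ↔ cbarCell n i ∉ R)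

open Classical in
/-- The value of the counter under a configuration `R`: `Σ_{i : cᵢ ∈ R} 2^i`. -/
noncomputable def counterValue (R : Set (Fin 3 × Fin n)) : ℕ :=
  ∑ i : Fin n, if cCell n i ∈ R then 2 ^ (i : ℕ) else 0

section Aux

variable {n : ℕ} [NeZero n]

lemma mem_pApply {Q : Type*} {R : Set Q} {f : PTrans Q} {y : Q} :
    y ∈ pApply R f ↔ ∃ x ∈ R, f x = some y := Iff.rfl

lemma pApply_ncard_le {Q : Type*} [Finite Q] (R : Set Q) (f : PTrans Q) :
    (pApply R f).ncard ≤ R.ncard := by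
  have hsub : pApply R f ⊆ (fun q => (f q).getD q) '' R := by
    rintro y ⟨x, hx, hfx⟩
    exact ⟨x, hx, by simp [hfx]⟩
  calc (pApply R f).ncard ≤ ((fun q => (f q).getD q) '' R).ncard :=
        Set.ncard_le_ncard hsub (Set.toFinite _)
    _ ≤ R.ncard := Set.ncard_image_le (Set.toFinite _)

lemma wordApply_ncard_le {Q : Type*} [Finite Q] (R : Set Q) (u : List (PTrans Q)) :
    (wordApply R u).ncard ≤ R.ncard := by
  induction u generalizing R with
  | nil => exact le_rfl
  | cons f u ih => exact le_trans (ih (pApply R f)) (pApply_ncard_le R f)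

lemma pApply_eq_self {Q : Type*} [Finite Q] {R : Set Q} {f : PTrans Q}
    (hid : ∀ x y, f x = some y → y = x)
    (hcard : (pApply R f).ncard = R.ncard) : pApply R f = R := by
  have hsub : pApply R f ⊆ R := by rintro y ⟨x, hx, hfx⟩; rwa [hid x y hfx]
  exact Set.eq_of_subset_of_ncard_le hsub hcard.ge (Set.toFinite _)

lemma valid_rot (a : Fin n) {R : Set (Fin 3 × Fin n)} (hR : ValidConf n R) :
    ValidConf n (pApply R (fun x => some (x.1, x.2 + a))) := by
  have hmem : ∀ y : Fin 3 × Fin n,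
      y ∈ pApply R (fun x => some (x.1, x.2 + a)) ↔ (y.1, y.2 - a) ∈ R := by
    intro y
    constructor
    · rintro ⟨x, hx, hfx⟩
      obtain rfl : (x.1, x.2 + a) = y := Option.some_injective _ hfx
      simpa using hx
    · intro h
      exact ⟨(y.1, y.2 - a), h, by simp⟩
  obtain ⟨⟨j, hj, hju⟩, hc⟩ := hR
  constructor
  · refine ⟨j + a, ?_, ?_⟩
    · show dCell n (j + a) ∈ _
      rw [hmem]; simpa [dCell] using hj
    · intro i hi
      have hi' : dCell n i ∈ pApply R fun x => some (x.1, x.2 + a) := hi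
      rw [hmem] at hi'
      have h2 : i - a = j := hju (i - a) (by simpa [dCell] using hi')
      rw [← h2]; simp
  · intro i
    rw [hmem, hmem]
    simpa [cCell, cbarCell] using hc (i - a)

lemma cbar_mem_of_c_notmem {R : Set (Fin 3 × Fin n)} (hR : ValidConf n R)
    (i : Fin n) (h : cCell n i ∉ R) : cbarCell n i ∈ R := by
  by_contra hb
  exact h ((hR.2 i).mpr hb)

lemma c_mem_of_cbar_notmem {R : Set (Fin 3 × Fin n)} (hR : ValidConf n R)
    (i : Fin n) (h : cbarCell n i ∉ R) : cCell n i ∈ R := (hR.2 i).mpr h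

lemma ncard_lt_of_notdef {R : Set (Fin 3 × Fin n)} {f : PTrans (Fin 3 × Fin n)}
    {x : Fin 3 × Fin n} (hx : x ∈ R) (hfx : f x = none) :
    (pApply R f).ncard < R.ncard := by
  have h1 : pApply R f = pApply (R \ {x}) f := by
    ext y
    simp only [mem_pApply, Set.mem_diff, Set.mem_singleton_iff]
    constructor
    · rintro ⟨z, hz, hfz⟩
      refine ⟨z, ⟨hz, ?_⟩, hfz⟩
      rintro rfl
      rw [hfx] at hfz
      cases hfz
    · rintro ⟨z, ⟨hz, _⟩, hfz⟩
      exact ⟨z, hz, hfz⟩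
  calc (pApply R f).ncard ≤ (R \ {x}).ncard := by
        rw [h1]; exact pApply_ncard_le _ _
    _ < R.ncard := Set.ncard_diff_singleton_lt_of_mem hx (Set.toFinite R)

/-- Validity of a "swap one bit" update of a valid configuration. -/
lemma valid_flip {R : Set (Fin 3 × Fin n)} (hR : ValidConf n R)
    {a b : Fin 3 × Fin n}
    (hab : (a = cCell n 0 ∧ b = cbarCell n 0) ∨ (a = cbarCell n 0 ∧ b = cCell n 0)) :
    ValidConf n (insert b (R \ {a})) := by
  constructor
  · obtain ⟨j, hj, hju⟩ := hR.1
    have hd : ∀ i : Fin n, dCell n i ∈ insert b (R \ {a}) ↔ dCell n i ∈ R := by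
      intro i
      rcases hab with ⟨ha, hb⟩ | ⟨ha, hb⟩ <;>
        simp [ha, hb, dCell, cCell, cbarCell, Set.mem_insert_iff, Prod.ext_iff,
          show (0 : Fin 3) ≠ 1 by decide, show (0 : Fin 3) ≠ 2 by decide]
    exact ⟨j, (hd j).mpr hj, fun i hi => hju i ((hd i).mp hi)⟩
  · intro i
    by_cases hi : i = 0
    · subst hi
      rcases hab with ⟨ha, hb⟩ | ⟨ha, hb⟩ <;> subst ha <;> subst hb
      · -- removed c₀, inserted c̄₀
        simp [Set.mem_insert_iff, cCell, cbarCell, Prod.ext_iff,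
          show (1 : Fin 3) ≠ 2 by decide]
      · simp [Set.mem_insert_iff, cCell, cbarCell, Prod.ext_iff,
          show (1 : Fin 3) ≠ 2 by decide]
    · have h1 : cCell n i ∈ insert b (R \ {a}) ↔ cCell n i ∈ R := by
        rcases hab with ⟨ha, hb⟩ | ⟨ha, hb⟩ <;>
          simp [ha, hb, Set.mem_insert_iff, cCell, cbarCell, Prod.ext_iff,
            show (1 : Fin 3) ≠ 2 by decide, hi]
      have h2 : cbarCell n i ∈ insert b (R \ {a}) ↔ cbarCell n i ∈ R := by
        rcases hab with ⟨ha, hb⟩ | ⟨ha, hb⟩ <;>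
          simp [ha, hb, Set.mem_insert_iff, cCell, cbarCell, Prod.ext_iff,
            show (1 : Fin 3) ≠ 2 by decide, hi]
      rw [h1, h2]
      exact hR.2 i

lemma valid_inc {R : Set (Fin 3 × Fin n)} (hR : ValidConf n R)
    (hcard : (pApply R (incI n)).ncard = R.ncard) :
    ValidConf n (pApply R (incI n)) := by
  have hc0 : cCell n 0 ∉ R := by
    intro hmem
    have hfx : incI n (cCell n 0) = none := by
      simp [incI, cCell, cbarCell, Prod.ext_iff, show (1 : Fin 3) ≠ 2 by decide]
    have := ncard_lt_of_notdef hmem hfx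
    omega
  have hcb : cbarCell n 0 ∈ R := cbar_mem_of_c_notmem hR 0 hc0
  have heq : pApply R (incI n) = insert (cCell n 0) (R \ {cbarCell n 0}) := by
    ext y
    simp only [mem_pApply, Set.mem_insert_iff, Set.mem_diff, Set.mem_singleton_iff]
    constructor
    · rintro ⟨x, hx, hfx⟩
      unfold incI at hfx
      split_ifs at hfx with h1 h2
      · left; exact (Option.some.inj hfx).symm
      · obtain rfl := Option.some.inj hfx
        exact Or.inr ⟨hx, h1⟩
    · rintro (rfl | ⟨hy, hne⟩)
      · exact ⟨cbarCell n 0, hcb, by simp [incI]⟩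
      · have hyc : y ≠ cCell n 0 := fun h => hc0 (h ▸ hy)
        exact ⟨y, hy, by simp [incI, hne, hyc]⟩
  rw [heq]
  exact valid_flip hR (Or.inr ⟨rfl, rfl⟩)

lemma valid_dec {R : Set (Fin 3 × Fin n)} (hR : ValidConf n R)
    (hcard : (pApply R (decI n)).ncard = R.ncard) :
    ValidConf n (pApply R (decI n)) := by
  have hc0 : cbarCell n 0 ∉ R := by
    intro hmem
    have hfx : decI n (cbarCell n 0) = none := by
      simp [decI, cCell, cbarCell, Prod.ext_iff, show (2 : Fin 3) ≠ 1 by decide]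
    have := ncard_lt_of_notdef hmem hfx
    omega
  have hcb : cCell n 0 ∈ R := c_mem_of_cbar_notmem hR 0 hc0
  have heq : pApply R (decI n) = insert (cbarCell n 0) (R \ {cCell n 0}) := by
    ext y
    simp only [mem_pApply, Set.mem_insert_iff, Set.mem_diff, Set.mem_singleton_iff]
    constructor
    · rintro ⟨x, hx, hfx⟩
      unfold decI at hfx
      split_ifs at hfx with h1 h2
      · left; exact (Option.some.inj hfx).symm
      · obtain rfl := Option.some.inj hfx
        exact Or.inr ⟨hx, h1⟩
    · rintro (rfl | ⟨hy, hne⟩)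
      · exact ⟨cCell n 0, hcb, by simp [decI]⟩
      · have hyc : y ≠ cbarCell n 0 := fun h => hc0 (h ▸ hy)
        exact ⟨y, hy, by simp [decI, hne, hyc]⟩
  rw [heq]
  exact valid_flip hR (Or.inl ⟨rfl, rfl⟩)

lemma step_valid {R : Set (Fin 3 × Fin n)} (hR : ValidConf n R)
    {f : PTrans (Fin 3 × Fin n)} (hf : f ∈ counterI n)
    (hcard : (pApply R f).ncard = R.ncard) : ValidConf n (pApply R f) := by
  simp only [counterI, Set.mem_insert_iff, Set.mem_singleton_iff] at hf
  rcases hf with rfl | rfl | rfl | rfl | rfl | rfl | rfl | rfl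
  · have h : rotl n = fun x : Fin 3 × Fin n => some (x.1, x.2 + 1) := rfl
    rw [h]; exact valid_rot 1 hR
  · have h : rotr n = fun x : Fin 3 × Fin n => some (x.1, x.2 + (-1)) := by
      funext x; simp [rotr, sub_eq_add_neg]
    rw [h]; exact valid_rot (-1) hR
  · rw [pApply_eq_self (f := eqz n) (fun x y h => by
      unfold eqz at h; split_ifs at h; exact (Option.some.inj h).symm) hcard]
    exact hR
  · rw [pApply_eq_self (f := eqo n) (fun x y h => by
      unfold eqo at h; split_ifs at h; exact (Option.some.inj h).symm) hcard]
    exact hR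
  · rw [pApply_eq_self (f := syncI n) (fun x y h => by
      unfold syncI at h; split_ifs at h; exact (Option.some.inj h).symm) hcard]
    exact hR
  · rw [pApply_eq_self (f := offI n) (fun x y h => by
      unfold offI at h; split_ifs at h; exact (Option.some.inj h).symm) hcard]
    exact hR
  · exact valid_inc hR hcard
  · exact valid_dec hR hcard

lemma valid_word (u : List (PTrans (Fin 3 × Fin n))) :
    ∀ R : Set (Fin 3 × Fin n), ValidConf n R → (∀ x ∈ u, x ∈ counterI n) →
      (wordApply R u).ncard = R.ncard → ValidConf n (wordApply R u) := by
  induction u with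
  | nil => intro R hR _ _; exact hR
  | cons f u ih =>
    intro R hR hu hcard
    have h1 : wordApply R (f :: u) = wordApply (pApply R f) u := rfl
    have hle1 := wordApply_ncard_le (pApply R f) u
    have hle2 := pApply_ncard_le R f
    rw [h1] at hcard
    have hstep : (pApply R f).ncard = R.ncard := by omega
    have hR' := step_valid hR (hu f List.mem_cons_self) hstep
    rw [h1]
    exact ih (pApply R f) hR' (fun x hx => hu x (List.mem_cons_of_mem f hx)) (by omega)

end Aux

/-- Applying any word over the instruction set of an `n`-bit
binary counter to a valid configuration, without decreasing its cardinality,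
yields a valid configuration. -/
theorem counter_preserves_validity
    (R : Set (Fin 3 × Fin n)) (hR : ValidConf n R)
    (u : List (PTrans (Fin 3 × Fin n))) (hu : ∀ x ∈ u, x ∈ counterI n)
    (hcard : (wordApply R u).ncard = R.ncard) :
    ValidConf n (wordApply R u) := by
  exact valid_word u R hR hu hcard
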